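/- arXiv:1004.5551 — 4 statements merged into one kernel-verified Lean document; each statement's English description precedes it below -/
import Mathlib

section
/- Type class probability bound: Let S be a nonempty finite set, l a positive integer, s^l ∈ S^l, and let q be the type of s^l. Then the product probability assigned by q to the type class of q satisfies ∑_{t^l ∈ S^l, type(t^l) = q} q(t_1)·…·q(t_l) ≥ (l+1)^{−|S|}. -/
open Finset

lemma fact_le_fact_mul_pow {m n : ℕ} (h : m ≤ n) : n.factorial ≤ m.factorial * n ^ (n - m) := by
  induction n, h using Nat.le_induction with
  | base => simp
  | succ n hmn ih =>
      have h1 : n.factorial ≤ m.factorial * n ^ (n - m) := ih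
      have : (n+1).factorial = (n+1) * n.factorial := rfl
      calc (n+1).factorial = (n+1) * n.factorial := rfl
        _ ≤ (n+1) * (m.factorial * n ^ (n - m)) := Nat.mul_le_mul_left _ h1
        _ ≤ (n+1) * (m.factorial * (n+1) ^ (n - m)) := by
            exact Nat.mul_le_mul_left _ (Nat.mul_le_mul_left _ (Nat.pow_le_pow_left (by omega) _))
        _ = m.factorial * (n+1) ^ (n + 1 - m) := by
            rw [show n + 1 - m = (n - m) + 1 by omega, pow_succ]; ring

lemma fact_mul_pow_le_fact {m n : ℕ} (h : m ≤ n) : m.factorial * m ^ (n - m) ≤ n.factorial := by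
  induction n, h using Nat.le_induction with
  | base => simp
  | succ n hmn ih =>
      calc m.factorial * m ^ (n + 1 - m)
          = m.factorial * m ^ (n - m) * m := by
            rw [show n + 1 - m = (n - m) + 1 by omega, pow_succ]; ring
        _ ≤ n.factorial * (n+1) := Nat.mul_le_mul ih (by omega)
        _ = (n+1).factorial := by rw [Nat.factorial_succ]; ring

lemma fact_pow_key (a c : ℕ) : a.factorial * a ^ c ≤ c.factorial * a ^ a := by
  rcases le_total c a with h | h
  · calc a.factorial * a ^ c ≤ c.factorial * a ^ (a - c) * a ^ c :=
          Nat.mul_le_mul_right _ (fact_le_fact_mul_pow h)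
      _ = c.factorial * a ^ a := by rw [mul_assoc, ← pow_add, Nat.sub_add_cancel h]
  · calc a.factorial * a ^ c = a.factorial * a ^ (c - a) * a ^ a := by
          rw [mul_assoc, ← pow_add, Nat.sub_add_cancel h]
      _ ≤ c.factorial * a ^ a := Nat.mul_le_mul_right _ (fact_mul_pow_le_fact h)

lemma card_filter_subtype {ι S : Type*} [Fintype ι] [DecidableEq ι] [DecidableEq S]
    (A : Finset ι) (t : ι → S) (x : S) (h : ∀ i ∈ A, t i ≠ x) :
    (univ.filter fun i : {i // i ∉ A} => t ↑i = x).card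
      = (univ.filter fun i : ι => t i = x).card := by
  refine Finset.card_bij (fun (i : {i // i ∉ A}) (_ : i ∈ univ.filter fun i : {i // i ∉ A} => t ↑i = x) => (i : ι)) ?_ ?_ ?_
  · intro i hi
    simp only [mem_filter, mem_univ, true_and] at hi ⊢
    exact hi
  · intro i _ j _ hij
    exact Subtype.ext hij
  · intro i hi
    simp only [mem_filter, mem_univ, true_and] at hi
    have hiA : i ∉ A := fun hA => h i hA hi
    exact ⟨⟨i, hiA⟩, by simpa using hi, rfl⟩

lemma card_count_class {S : Type*} [DecidableEq S] [Fintype S] :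
    ∀ (u : Finset S) (ι : Type) [Fintype ι] [DecidableEq ι] (c : S → ℕ),
      (∑ x ∈ u, c x = Fintype.card ι) →
      (univ.filter (fun t : ι → S =>
        (∀ i, t i ∈ u) ∧ ∀ x ∈ u, (univ.filter (fun i => t i = x)).card = c x)).card
        = Nat.multinomial u c := by
  intro u
  induction u using Finset.cons_induction with
  | empty =>
      intro ι _ _ c hc
      simp only [Finset.sum_empty] at hc
      haveI : IsEmpty ι := Fintype.card_eq_zero_iff.mp hc.symm
      rw [Nat.multinomial_empty,
        Finset.filter_true_of_mem
          (fun t _ => ⟨fun i => (IsEmpty.false i).elim, fun x hx => by simp at hx⟩),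
        Finset.card_univ]
      simp
  | cons x0 u' hx0 ih =>
      intro ι _ _ c hc
      rw [Finset.sum_cons] at hc
      set k := c x0 with hk
      have hkn : k ≤ Fintype.card ι := by omega
      set Class := (univ.filter (fun t : ι → S =>
        (∀ i, t i ∈ cons x0 u' hx0) ∧ ∀ x ∈ cons x0 u' hx0,
          (univ.filter (fun i => t i = x)).card = c x)) with hClass
      have hmaps : ∀ t ∈ Class, (univ.filter (fun i => t i = x0)) ∈
          Finset.powersetCard k (univ : Finset ι) := by
        intro t ht
        rw [Finset.mem_powersetCard_univ]
        simp only [hClass, mem_filter, mem_univ, true_and] at ht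
        exact ht.2 x0 (Finset.mem_cons_self _ _)
      rw [Finset.card_eq_sum_card_fiberwise hmaps]
      have hfiber : ∀ A ∈ Finset.powersetCard k (univ : Finset ι),
          (Class.filter (fun t => (univ.filter (fun i => t i = x0)) = A)).card
            = Nat.multinomial u' c := by
        intro A hA
        rw [Finset.mem_powersetCard_univ] at hA
        have hcard' : ∑ x ∈ u', c x = Fintype.card {i : ι // i ∉ A} := by
          rw [Fintype.card_subtype_compl, Fintype.card_coe, hA]
          omega
        rw [← ih {i : ι // i ∉ A} c hcard']
        refine Finset.card_bij'
          (fun t (_ : t ∈ Class.filter (fun t => (univ.filter (fun i => t i = x0)) = A)) =>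
            fun i : {i : ι // i ∉ A} => t ↑i)
          (fun t' (_ : t' ∈ univ.filter (fun t' : {i : ι // i ∉ A} → S =>
              (∀ i, t' i ∈ u') ∧ ∀ x ∈ u', (univ.filter (fun i => t' i = x)).card = c x)) =>
            fun i : ι => if h : i ∉ A then t' ⟨i, h⟩ else x0) ?_ ?_ ?_ ?_
        · -- forward membership
          intro t ht
          simp only [hClass, mem_filter, mem_univ, true_and] at ht ⊢
          obtain ⟨⟨hval, hcnt⟩, hfib⟩ := ht
          constructor
          · intro i
            have h1 := hval ↑i
            rw [Finset.mem_cons] at h1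
            rcases h1 with h1 | h1
            · exfalso
              apply i.2
              have hmem : (i : ι) ∈ univ.filter (fun j => t j = x0) := by
                simp [h1]
              rw [hfib] at hmem
              exact hmem
            · exact h1
          · intro x hx
            have hxne : x ≠ x0 := fun h => hx0 (h ▸ hx)
            rw [card_filter_subtype A t x]
            · exact hcnt x (Finset.mem_cons_of_mem hx)
            · intro i hiA
              have : t i = x0 := by
                rw [← hfib] at hiA
                simpa using hiA
              rw [this]
              exact fun h => hxne h.symm
        · -- backward membership
          intro t' ht'
          simp only [mem_filter, mem_univ, true_and] at ht'
          obtain ⟨hval, hcnt⟩ := ht'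
          have hfib' : (univ.filter (fun i : ι =>
              (if h : i ∉ A then t' ⟨i, h⟩ else x0) = x0)) = A := by
            ext i
            simp only [mem_filter, mem_univ, true_and]
            by_cases hiA : i ∉ A
            · rw [dif_pos hiA]
              constructor
              · intro h; exact absurd (h ▸ hval ⟨i, hiA⟩) hx0
              · intro h; exact absurd h hiA
            · rw [dif_neg hiA]; simpa using not_not.mp hiA
          simp only [hClass, mem_filter, mem_univ, true_and]
          refine ⟨⟨?_, ?_⟩, hfib'⟩
          · intro i
            by_cases hiA : i ∉ A
            · rw [dif_pos hiA]; exact Finset.mem_cons_of_mem (hval _)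
            · rw [dif_neg hiA]; exact Finset.mem_cons_self _ _
          · intro x hx
            rw [Finset.mem_cons] at hx
            rcases hx with hx | hx
            · rw [hx, hfib', hA, hk]
            · have hxne : x ≠ x0 := fun h => hx0 (h ▸ hx)
              rw [← hcnt x hx,
                ← card_filter_subtype A (fun i : ι => if h : i ∉ A then t' ⟨i, h⟩ else x0) x
                  (by
                    intro i hiA
                    show (if h : i ∉ A then t' ⟨i, h⟩ else x0) ≠ x
                    rw [dif_neg (not_not.mpr hiA)]
                    exact fun h => hxne h.symm)]
              congr 1
              ext i
              simp only [mem_filter, mem_univ, true_and, dif_pos i.2]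
        · -- left inverse
          intro t ht
          simp only [hClass, mem_filter, mem_univ, true_and] at ht
          obtain ⟨_, hfib⟩ := ht
          funext i
          show (if h : i ∉ A then t ↑(⟨i, h⟩ : {i : ι // i ∉ A}) else x0) = t i
          by_cases hiA : i ∉ A
          · rw [dif_pos hiA]
          · rw [dif_neg hiA]
            have hmem : i ∈ A := not_not.mp hiA
            rw [← hfib] at hmem
            simp only [mem_filter, mem_univ, true_and] at hmem
            exact hmem.symm
        · -- right inverse
          intro t' _
          funext i
          show (if h : (i : ι) ∉ A then t' ⟨↑i, h⟩ else x0) = t' i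
          rw [dif_pos i.2]
      rw [Finset.sum_congr rfl hfiber, Finset.sum_const, Finset.card_powersetCard,
        Finset.card_univ, Nat.multinomial_cons, smul_eq_mul]
      congr 1
      rw [hc]

/-- Type class probability bound: the i.i.d. product distribution induced by the type `q` of
a sequence `s : Fin l → S` assigns probability at least `(l+1)^{-|S|}` to the type class of
`q`, i.e. to the set of all sequences having the same type as `s`. Here the type of `t`
evaluated at `x` is `|{j : t j = x}| / l`. -/
theorem type_class_probability_bound
    {S : Type*} [Fintype S] [DecidableEq S] [Nonempty S]
    (l : ℕ) (hl : 0 < l) (s : Fin l → S) :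
    (((l : ℝ) + 1) ^ (Fintype.card S))⁻¹ ≤
      ∑ t ∈ univ.filter (fun t : Fin l → S =>
          ∀ x : S, (univ.filter (fun j : Fin l => t j = x)).card
            = (univ.filter (fun j : Fin l => s j = x)).card),
        ∏ i : Fin l, (((univ.filter (fun j : Fin l => s j = t i)).card : ℝ) / l) := by
  set cnt : (Fin l → S) → S → ℕ := fun t x => (univ.filter (fun j : Fin l => t j = x)).card
    with hcnt
  set q : S → ℝ := fun x => (cnt s x : ℝ) / l with hq
  have hlR : (0 : ℝ) < l := by exact_mod_cast hl
  -- the product along a sequence in terms of counts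
  have hprodt : ∀ t : Fin l → S, (∏ i : Fin l, q (t i)) = ∏ x : S, q x ^ (cnt t x) := by
    intro t
    rw [Finset.prod_comp q t]
    refine Finset.prod_subset (Finset.subset_univ _) ?_
    intro x _ hx
    have hemp : (univ.filter fun j : Fin l => t j = x) = ∅ := by
      rw [Finset.filter_eq_empty_iff]
      intro j _
      exact fun hj => hx (hj ▸ Finset.mem_image_of_mem t (mem_univ j))
    simp [hemp]
  -- sum of counts is l
  have hsumcnt : ∀ t : Fin l → S, ∑ x : S, cnt t x = l := by
    intro t
    have := Finset.card_eq_sum_card_fiberwise (fun (i : Fin l) (_ : i ∈ univ) => mem_univ (t i))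
    simpa [hcnt] using this.symm
  -- class sums
  set CS : (S → ℕ) → ℝ := fun c =>
    ∑ t ∈ univ.filter (fun t : Fin l → S => ∀ x : S, cnt t x = c x), ∏ i : Fin l, q (t i)
    with hCS
  -- class sum formula
  have hclasscard : ∀ c : S → ℕ, (∑ x : S, c x = l) →
      (univ.filter (fun t : Fin l → S => ∀ x : S, cnt t x = c x)).card
        = Nat.multinomial univ c := by
    intro c hc
    rw [← card_count_class univ (Fin l) c (by simpa using hc)]
    congr 1
    ext t
    simp [hcnt]
  have hCSeval : ∀ c : S → ℕ, (∑ x : S, c x = l) →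
      CS c = (Nat.multinomial univ c : ℝ) * ∏ x : S, q x ^ c x := by
    intro c hc
    rw [hCS]
    simp only
    have hcongr : ∀ t ∈ univ.filter (fun t : Fin l → S => ∀ x : S, cnt t x = c x),
        (∏ i : Fin l, q (t i)) = ∏ x : S, q x ^ c x := by
      intro t ht
      rw [hprodt t]
      exact Finset.prod_congr rfl (fun x _ => by rw [(Finset.mem_filter.mp ht).2 x])
    rw [Finset.sum_congr rfl hcongr, Finset.sum_const, hclasscard c hc, nsmul_eq_mul]
  -- key inequality between class sums
  have hkey : ∀ c : S → ℕ, CS c ≤ CS (cnt s) := by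
    intro c
    by_cases hne : (univ.filter (fun t : Fin l → S => ∀ x : S, cnt t x = c x)).Nonempty
    · obtain ⟨t0, ht0⟩ := hne
      have ht0' := (Finset.mem_filter.mp ht0).2
      have hc : ∑ x : S, c x = l := by
        rw [← hsumcnt t0]
        exact Finset.sum_congr rfl (fun x _ => (ht0' x).symm)
      have ha : ∑ x : S, cnt s x = l := hsumcnt s
      rw [hCSeval c hc, hCSeval (cnt s) ha]
      -- reduce to natural number inequality
      have hqpow : ∀ d : S → ℕ, (∑ x : S, d x = l) →
          (∏ x : S, q x ^ d x) = (∏ x : S, (cnt s x : ℝ) ^ d x) / (l : ℝ) ^ l := by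
        intro d hd
        rw [hq]
        simp only
        rw [← hd, ← Finset.prod_pow_eq_pow_sum]
        rw [← Finset.prod_div_distrib]
        exact Finset.prod_congr rfl (fun x _ => by rw [div_pow])
      rw [hqpow c hc, hqpow (cnt s) ha]
      rw [mul_div_assoc', mul_div_assoc', div_le_div_iff_of_pos_right (by positivity)]
      have hnat : Nat.multinomial univ c * ∏ x : S, (cnt s x) ^ c x
          ≤ Nat.multinomial univ (cnt s) * ∏ x : S, (cnt s x) ^ (cnt s x) := by
        have hK : 0 < (∏ x : S, (cnt s x).factorial) * (∏ x : S, (c x).factorial) :=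
          Nat.mul_pos (Finset.prod_pos fun x _ => Nat.factorial_pos _)
            (Finset.prod_pos fun x _ => Nat.factorial_pos _)
        refine Nat.le_of_mul_le_mul_right ?_ hK
        have e1 : Nat.multinomial univ c * (∏ x : S, (cnt s x) ^ c x)
              * ((∏ x : S, (cnt s x).factorial) * (∏ x : S, (c x).factorial))
            = (∑ x : S, c x).factorial * ∏ x : S, ((cnt s x).factorial * (cnt s x) ^ c x) := by
          rw [Finset.prod_mul_distrib, ← Nat.multinomial_spec univ c]; ring
        have e2 : Nat.multinomial univ (cnt s) * (∏ x : S, (cnt s x) ^ (cnt s x))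
              * ((∏ x : S, (cnt s x).factorial) * (∏ x : S, (c x).factorial))
            = (∑ x : S, cnt s x).factorial * ∏ x : S, ((c x).factorial * (cnt s x) ^ (cnt s x)) := by
          rw [Finset.prod_mul_distrib, ← Nat.multinomial_spec univ (cnt s)]; ring
        rw [e1, e2, hc, ha]
        exact Nat.mul_le_mul_left _
          (Finset.prod_le_prod' fun x _ => fact_pow_key (cnt s x) (c x))
      calc (Nat.multinomial univ c : ℝ) * ∏ x : S, ((cnt s x : ℝ)) ^ c x
          = ((Nat.multinomial univ c * ∏ x : S, (cnt s x) ^ c x : ℕ) : ℝ) := by push_cast; ring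
        _ ≤ ((Nat.multinomial univ (cnt s) * ∏ x : S, (cnt s x) ^ (cnt s x) : ℕ) : ℝ) := by
            exact_mod_cast hnat
        _ = (Nat.multinomial univ (cnt s) : ℝ) * ∏ x : S, ((cnt s x : ℝ)) ^ (cnt s x) := by
            push_cast; ring
    · rw [Finset.not_nonempty_iff_eq_empty] at hne
      have h0 : CS c = 0 := by rw [hCS]; simp [hne]
      rw [h0, hCS]
      refine Finset.sum_nonneg fun t _ => Finset.prod_nonneg fun i _ => ?_
      positivity
  -- total probability is 1
  have hq1 : ∑ x : S, q x = 1 := by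
    rw [hq]
    simp only
    rw [← Finset.sum_div, ← Nat.cast_sum, hsumcnt s]
    field_simp
  have htot : ∑ t : Fin l → S, ∏ i : Fin l, q (t i) = 1 := by
    have := Fintype.sum_pow q l
    rw [hq1, one_pow] at this
    exact this.symm
  -- fiberwise decomposition over types valued in Fin (l+1)
  set ct : (Fin l → S) → (S → Fin (l + 1)) := fun t x =>
    ⟨cnt t x, Nat.lt_succ_of_le (by
      simpa [hcnt] using (Finset.card_filter_le univ (fun j : Fin l => t j = x)))⟩
    with hct
  have hfib : ∑ j : S → Fin (l + 1), ∑ t ∈ univ.filter (fun t => ct t = j),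
      ∏ i : Fin l, q (t i) = ∑ t : Fin l → S, ∏ i : Fin l, q (t i) :=
    Finset.sum_fiberwise univ ct (fun t => ∏ i : Fin l, q (t i))
  have hfibCS : ∀ j : S → Fin (l + 1),
      (∑ t ∈ univ.filter (fun t => ct t = j), ∏ i : Fin l, q (t i))
        = CS (fun x => (j x : ℕ)) := by
    intro j
    rw [hCS]
    congr 1
    apply Finset.filter_congr
    intro t _
    constructor
    · intro h x
      have := congrFun h x
      rw [hct] at this
      exact congrArg Fin.val this
    · intro h
      funext x
      rw [hct]
      exact Fin.ext (h x)
  have hbound : (1 : ℝ) ≤ ((l : ℝ) + 1) ^ (Fintype.card S) * CS (cnt s) := by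
    calc (1 : ℝ) = ∑ j : S → Fin (l + 1), ∑ t ∈ univ.filter (fun t => ct t = j),
          ∏ i : Fin l, q (t i) := (htot ▸ hfib).symm
      _ ≤ ∑ _j : S → Fin (l + 1), CS (cnt s) := by
          refine Finset.sum_le_sum fun j _ => ?_
          rw [hfibCS j]
          exact hkey _
      _ = ((l : ℝ) + 1) ^ (Fintype.card S) * CS (cnt s) := by
          rw [Finset.sum_const, Finset.card_univ, Fintype.card_fun, Fintype.card_fin,
            nsmul_eq_mul]
          push_cast
          ring
  -- conclude
  have hfinal : CS (cnt s) =
      ∑ t ∈ univ.filter (fun t : Fin l → S =>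
          ∀ x : S, (univ.filter (fun j : Fin l => t j = x)).card
            = (univ.filter (fun j : Fin l => s j = x)).card),
        ∏ i : Fin l, (((univ.filter (fun j : Fin l => s j = t i)).card : ℝ) / l) := rfl
  rw [← hfinal]
  have hCpos : (0 : ℝ) < ((l : ℝ) + 1) ^ (Fintype.card S) := by positivity
  rw [inv_eq_one_div, div_le_iff₀ hCpos]
  calc (1:ℝ) ≤ ((l : ℝ) + 1) ^ (Fintype.card S) * CS (cnt s) := hbound
    _ = CS (cnt s) * ((l : ℝ) + 1) ^ (Fintype.card S) := mul_comm _ _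
end

section
/- Finite-family selection lemma (core of random code reduction): Let (Ω, μ) be a probability space, T a nonempty finite index set, δ ∈ [0,1], and for each t ∈ T let f_t : Ω → [0,1] be measurable with ∫ f_t dμ ≥ 1 − δ. Let m ∈ ℕ and ε ∈ (0,1). If |T|·(1+δ)^m·2^{−mε} < 1, then there exist points ω_1, …, ω_m ∈ Ω such that (1/m)·∑_{i=1}^m f_t(ω_i) > 1 − ε for every t ∈ T. -/
open MeasureTheory

/-- Convexity bound: `2^x ≤ 1 + x` on `[0,1]`. -/
lemma two_rpow_le_one_add {x : ℝ} (h0 : 0 ≤ x) (h1 : x ≤ 1) : (2 : ℝ) ^ x ≤ 1 + x := by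
  have h := convexOn_exp.2 (Set.mem_univ (0 : ℝ)) (Set.mem_univ (Real.log 2))
    (sub_nonneg.2 h1) h0 (by ring)
  simp only [smul_eq_mul, mul_zero, zero_add, Real.exp_zero, mul_one,
    Real.exp_log two_pos] at h
  rw [Real.rpow_def_of_pos two_pos]
  calc Real.exp (Real.log 2 * x) = Real.exp (x * Real.log 2) := by rw [mul_comm]
    _ ≤ 1 - x + x * 2 := h
    _ = 1 + x := by ring

/-- Finite-family selection lemma (core of the random code reduction): if each of the
finitely many `[0,1]`-valued functions `f t` has mean at least `1 - δ` under the probability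
measure `μ`, and `|T| (1+δ)^m 2^{-mε} < 1`, then there are `m` points of `Ω` at which all
empirical averages exceed `1 - ε` simultaneously. -/
theorem finite_family_selection
    {Ω : Type*} [MeasurableSpace Ω] (μ : Measure Ω) [IsProbabilityMeasure μ]
    {T : Type*} [Fintype T] [Nonempty T]
    (δ : ℝ) (hδ0 : 0 ≤ δ) (hδ1 : δ ≤ 1)
    (f : T → Ω → ℝ) (hfm : ∀ t, Measurable (f t))
    (hf0 : ∀ t ω, 0 ≤ f t ω) (hf1 : ∀ t ω, f t ω ≤ 1)
    (hint : ∀ t, 1 - δ ≤ ∫ ω, f t ω ∂μ)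
    (m : ℕ) (ε : ℝ) (hε0 : 0 < ε) (hε1 : ε < 1)
    (hsmall : (Fintype.card T : ℝ) * (1 + δ) ^ m * (2 : ℝ) ^ (-(m : ℝ) * ε) < 1) :
    ∃ ω : Fin m → Ω, ∀ t : T, 1 - ε < (1 / (m : ℝ)) * ∑ i, f t (ω i) := by
  classical
  -- rule out `m = 0`
  rcases Nat.eq_zero_or_pos m with hm0 | hm
  · exfalso
    subst hm0
    simp only [Nat.cast_zero, neg_zero, zero_mul, Real.rpow_zero, pow_zero, mul_one] at hsmall
    have : (1 : ℝ) ≤ (Fintype.card T : ℝ) := by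
      exact_mod_cast Fintype.card_pos
    linarith
  have hmR : (0 : ℝ) < (m : ℝ) := by exact_mod_cast hm
  letI : MeasureSpace Ω := ⟨μ⟩
  have hμvol : (volume : Measure Ω) = μ := rfl
  -- the function `g t = 2 ^ (1 - f t)`
  set g : T → Ω → ℝ := fun t ω => (2 : ℝ) ^ (1 - f t ω) with hg
  have hgm : ∀ t, Measurable (g t) := by
    intro t
    have hrw : g t = fun ω => Real.exp (Real.log 2 * (1 - f t ω)) := by
      funext ω
      rw [hg]
      exact Real.rpow_def_of_pos two_pos _
    rw [hrw]
    exact Real.measurable_exp.comp (measurable_const.mul (measurable_const.sub (hfm t)))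
  have hg_nonneg : ∀ t ω, 0 ≤ g t ω := fun t ω => Real.rpow_nonneg (by norm_num) _
  have hg_le : ∀ t ω, g t ω ≤ 2 - f t ω := by
    intro t ω
    have := two_rpow_le_one_add (x := 1 - f t ω) (by linarith [hf1 t ω]) (by linarith [hf0 t ω])
    calc g t ω ≤ 1 + (1 - f t ω) := this
      _ = 2 - f t ω := by ring
  have hg_le2 : ∀ t ω, g t ω ≤ 2 := fun t ω => (hg_le t ω).trans (by linarith [hf0 t ω])
  -- integrability
  have hf_int : ∀ t, Integrable (f t) μ := by
    intro t
    refine (integrable_const (1 : ℝ)).mono' (hfm t).aestronglyMeasurable ?_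
    exact ae_of_all _ fun ω => by
      rw [Real.norm_eq_abs, abs_le]; exact ⟨by linarith [hf0 t ω], hf1 t ω⟩
  have hg_int : ∀ t, Integrable (g t) μ := by
    intro t
    refine (integrable_const (2 : ℝ)).mono' (hgm t).aestronglyMeasurable ?_
    exact ae_of_all _ fun ω => by
      rw [Real.norm_eq_abs, abs_le]
      exact ⟨by linarith [hg_nonneg t ω], hg_le2 t ω⟩
  -- mean bound for g
  have hg_mean : ∀ t, ∫ ω, g t ω ∂μ ≤ 1 + δ := by
    intro t
    have h1 : ∫ ω, g t ω ∂μ ≤ ∫ ω, (2 - f t ω) ∂μ :=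
      integral_mono (hg_int t) ((integrable_const 2).sub (hf_int t)) (hg_le t)
    have h2 : ∫ ω, (2 - f t ω) ∂μ = 2 - ∫ ω, f t ω ∂μ := by
      rw [integral_sub (integrable_const 2) (hf_int t), integral_const]
      simp
    rw [h2] at h1
    linarith [hint t]
  have hg_mean_nonneg : ∀ t, 0 ≤ ∫ ω, g t ω ∂μ := fun t =>
    integral_nonneg (hg_nonneg t)
  -- the product function on the product space
  set G : T → (Fin m → Ω) → ℝ := fun t x => ∏ i, g t (x i) with hG
  have hG_int : ∀ t, Integrable (G t) (volume : Measure (Fin m → Ω)) := fun t =>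
    Integrable.fintype_prod (𝕜 := ℝ) (f := fun _ : Fin m => g t) fun _ => hg_int t
  have hG_nonneg : ∀ t x, 0 ≤ G t x := fun t x =>
    Finset.prod_nonneg fun i _ => hg_nonneg t (x i)
  have hG_integral : ∀ t, ∫ x : Fin m → Ω, G t x ≤ (1 + δ) ^ m := by
    intro t
    have := integral_fintype_prod_eq_pow (𝕜 := ℝ) (ι := Fin m) (μ := (volume : Measure Ω)) (g t)
    rw [hG]
    simp only [Fintype.card_fin] at this
    rw [show ∫ x : Fin m → Ω, (fun t x => ∏ i, g t (x i)) t x = ∫ x : Fin m → Ω, ∏ i, g t (x i) ∂(Measure.pi fun _ => volume) from rfl, this]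
    exact pow_le_pow_left₀ (hg_mean_nonneg t) (hg_mean t) m
  -- Markov inequality
  set c : ℝ := (2 : ℝ) ^ ((m : ℝ) * ε) with hc
  have hc_pos : 0 < c := Real.rpow_pos_of_pos two_pos _
  set ν : Measure (Fin m → Ω) := (volume : Measure (Fin m → Ω)) with hν
  haveI : IsProbabilityMeasure ν := by
    rw [hν, MeasureTheory.volume_pi]
    infer_instance
  set A : T → Set (Fin m → Ω) := fun t => {x | c ≤ G t x} with hA
  have hmarkov : ∀ t, (ν (A t)).toReal ≤ (1 + δ) ^ m / c := by
    intro t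
    have h := mul_meas_ge_le_integral_of_nonneg (μ := ν)
      (ae_of_all _ fun x => hG_nonneg t x) (hG_int t) c
    rw [le_div_iff₀ hc_pos, mul_comm]
    exact h.trans (hG_integral t)
  -- union bound
  have hunion : (ν (⋃ t, A t)).toReal < 1 := by
    have h1 : ν (⋃ t, A t) ≤ ∑ t, ν (A t) := measure_iUnion_fintype_le _ _
    have h2 : (ν (⋃ t, A t)).toReal ≤ ∑ t, (ν (A t)).toReal := by
      calc (ν (⋃ t, A t)).toReal ≤ (∑ t, ν (A t)).toReal := by
            apply ENNReal.toReal_mono _ h1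
            exact (ENNReal.sum_lt_top.2 fun t _ => measure_lt_top ν (A t)).ne
        _ = ∑ t, (ν (A t)).toReal := ENNReal.toReal_sum fun t _ => (measure_lt_top ν (A t)).ne
    have h3 : ∑ t, (ν (A t)).toReal ≤ (Fintype.card T : ℝ) * ((1 + δ) ^ m / c) := by
      calc ∑ t, (ν (A t)).toReal ≤ ∑ _t : T, (1 + δ) ^ m / c :=
            Finset.sum_le_sum fun t _ => hmarkov t
        _ = (Fintype.card T : ℝ) * ((1 + δ) ^ m / c) := by
            rw [Finset.sum_const, nsmul_eq_mul, Finset.card_univ]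
    have h4 : (Fintype.card T : ℝ) * ((1 + δ) ^ m / c) < 1 := by
      have : (2 : ℝ) ^ (-(m : ℝ) * ε) = 1 / c := by
        rw [hc, neg_mul, Real.rpow_neg (by norm_num : (0:ℝ) ≤ 2), one_div]
      rw [this] at hsmall
      calc (Fintype.card T : ℝ) * ((1 + δ) ^ m / c)
          = (Fintype.card T : ℝ) * (1 + δ) ^ m * (1 / c) := by ring
        _ < 1 := hsmall
    linarith
  have hne : (⋃ t, A t) ≠ Set.univ := by
    intro h
    rw [h, measure_univ] at hunion
    simp at hunion
  obtain ⟨x, hx⟩ : ∃ x, x ∉ ⋃ t, A t := by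
    by_contra h
    push_neg at h
    exact hne (Set.eq_univ_of_forall h)
  refine ⟨x, fun t => ?_⟩
  have hxt : G t x < c := by
    by_contra h
    push_neg at h
    exact hx (Set.mem_iUnion.2 ⟨t, h⟩)
  -- rewrite G t x as 2 ^ (sum)
  have hGx : G t x = (2 : ℝ) ^ (∑ i, (1 - f t (x i))) := by
    rw [hG, Real.rpow_sum_of_pos two_pos]
  rw [hGx, hc] at hxt
  have hsum : ∑ i, (1 - f t (x i)) < (m : ℝ) * ε :=
    (Real.rpow_lt_rpow_left_iff (by norm_num : (1:ℝ) < 2)).1 hxt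
  have hsum' : (m : ℝ) - ∑ i, f t (x i) < (m : ℝ) * ε := by
    have heq : ∑ i, (1 - f t (x i)) = (m : ℝ) - ∑ i, f t (x i) := by
      rw [Finset.sum_sub_distrib, Finset.sum_const, Finset.card_univ, Fintype.card_fin,
        nsmul_eq_mul, mul_one]
    rw [heq] at hsum
    exact hsum
  rw [one_div, inv_mul_eq_div, lt_div_iff₀ hmR]
  nlinarith
end

section
/- Abstract random code reduction (Lemma: Random Code Reduction, measure-theoretic form): Let S be a nonempty finite set, a > 0, and ε ∈ (0,1). For each l ∈ ℕ let (Ω_l, μ_l) be a probability space and for each s^l ∈ S^l let f_{l,s^l} : Ω_l → [0,1] be measurable, and assume min_{s^l ∈ S^l} ∫ f_{l,s^l} dμ_l ≥ 1 − 2^{−l·a}. Then for all sufficiently large l there exist l² points ω_1, …, ω_{l²} ∈ Ω_l such that (1/l²)·∑_{i=1}^{l²} f_{l,s^l}(ω_i) > 1 − ε for every s^l ∈ S^l. -/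
open MeasureTheory

private lemma exp_le_chord {x : ℝ} (h0 : 0 ≤ x) (h1 : x ≤ 1) :
    Real.exp x ≤ 1 + (Real.exp 1 - 1) * x := by
  have h := convexOn_exp.2 (Set.mem_univ (0 : ℝ)) (Set.mem_univ (1 : ℝ))
    (by linarith : (0:ℝ) ≤ 1 - x) h0 (by ring)
  have hx : (1 - x) • (0:ℝ) + x • (1:ℝ) = x := by simp
  rw [hx] at h
  simp only [smul_eq_mul, Real.exp_zero] at h
  nlinarith [h]

/-- Abstract random code reduction: if for each block length `l` a random code `μ l` has
worst-case (over `s : Fin l → S`) expected performance at least `1 - 2^{-l a}`, then for all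
sufficiently large `l` there are `l²` deterministic codes whose uniform mixture has
worst-case performance exceeding `1 - ε`. -/
theorem random_code_reduction
    {S : Type*} [Fintype S] [Nonempty S]
    (a : ℝ) (ha : 0 < a) (ε : ℝ) (hε0 : 0 < ε) (hε1 : ε < 1)
    (Ω : ℕ → Type*) [∀ l, MeasurableSpace (Ω l)]
    (μ : ∀ l, Measure (Ω l)) [∀ l, IsProbabilityMeasure (μ l)]
    (f : ∀ l : ℕ, (Fin l → S) → Ω l → ℝ)
    (hfm : ∀ l (s : Fin l → S), Measurable (f l s))
    (hf0 : ∀ l (s : Fin l → S) (ω : Ω l), 0 ≤ f l s ω)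
    (hf1 : ∀ l (s : Fin l → S) (ω : Ω l), f l s ω ≤ 1)
    (hint : ∀ l (s : Fin l → S), 1 - (2 : ℝ) ^ (-(l : ℝ) * a) ≤ ∫ ω, f l s ω ∂(μ l)) :
    ∃ L : ℕ, ∀ l ≥ L, ∃ ω : Fin (l ^ 2) → Ω l,
      ∀ s : Fin l → S, 1 - ε < (1 / ((l : ℝ) ^ 2)) * ∑ i, f l s (ω i) := by
  classical
  set c := Fintype.card S with hc_def
  have hc : 0 < c := Fintype.card_pos
  -- condition 1 : 2^{-l a} small
  have h1 : ∀ᶠ l : ℕ in Filter.atTop, (2:ℝ) ^ (-(l:ℝ) * a) ≤ ε / 4 := by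
    have hb0 : (0:ℝ) < (2:ℝ) ^ (-a) := Real.rpow_pos_of_pos (by norm_num) _
    have hb1 : (2:ℝ) ^ (-a) < 1 := by
      apply Real.rpow_lt_one_of_one_lt_of_neg (by norm_num) (by linarith)
    have hlim : Filter.Tendsto (fun l : ℕ => ((2:ℝ) ^ (-a)) ^ l) Filter.atTop (nhds 0) :=
      tendsto_pow_atTop_nhds_zero_of_lt_one hb0.le hb1
    have := hlim.eventually (eventually_le_nhds (by positivity : (0:ℝ) < ε / 4))
    refine this.mono fun l hl => ?_
    have : (2:ℝ) ^ (-(l:ℝ) * a) = ((2:ℝ) ^ (-a)) ^ l := by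
      rw [← Real.rpow_natCast ((2:ℝ) ^ (-a)) l, ← Real.rpow_mul (by norm_num)]
      ring_nf
    rwa [this]
  obtain ⟨L1, hL1⟩ := Filter.eventually_atTop.mp h1
  obtain ⟨N, hN⟩ := exists_nat_gt (2 * Real.log c / ε)
  refine ⟨max L1 (max N 1), fun l hl => ?_⟩
  have hl1 : 1 ≤ l := le_trans (le_max_right N 1) (le_trans (le_max_right _ _) hl)
  have hδ : (2:ℝ) ^ (-(l:ℝ) * a) ≤ ε / 4 := hL1 l (le_trans (le_max_left _ _) hl)
  have hNl : 2 * Real.log c / ε < (l : ℝ) := by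
    have : (N : ℝ) ≤ l := by
      exact_mod_cast le_trans (le_max_left N 1) (le_trans (le_max_right _ _) hl)
    linarith
  set δ := (2:ℝ) ^ (-(l:ℝ) * a) with hδdef
  have hδ0 : 0 ≤ δ := (Real.rpow_pos_of_pos (by norm_num) _).le
  set n := l ^ 2 with hn_def
  have hn0 : 0 < n := by positivity
  letI : MeasureSpace (Ω l) := ⟨μ l⟩
  haveI : IsProbabilityMeasure (volume : Measure (Ω l)) := ‹∀ l, IsProbabilityMeasure (μ l)› l
  -- integral over volume equals integral over μ l
  have hvol : (volume : Measure (Ω l)) = μ l := rfl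
  set g : (Fin l → S) → Ω l → ℝ := fun s ω => 1 - f l s ω with hg_def
  have hg0 : ∀ s ω, 0 ≤ g s ω := fun s ω => by simp [hg_def, hf1 l s ω]
  have hg1 : ∀ s ω, g s ω ≤ 1 := fun s ω => by simp [hg_def, hf0 l s ω]
  have hgm : ∀ s, Measurable (g s) := fun s => measurable_const.sub (hfm l s)
  -- integral bounds on μ l
  have hfint : ∀ s : Fin l → S, Integrable (f l s) (μ l) := by
    intro s
    refine Integrable.mono' (integrable_const 1) (hfm l s).aestronglyMeasurable ?_
    exact Filter.Eventually.of_forall fun ω => by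
      rw [Real.norm_eq_abs, abs_of_nonneg (hf0 l s ω)]; exact hf1 l s ω
  have hgint : ∀ s, Integrable (g s) (μ l) := fun s => (integrable_const 1).sub (hfint s)
  have hgI : ∀ s, ∫ ω, g s ω ∂(μ l) ≤ δ := by
    intro s
    have : ∫ ω, g s ω ∂(μ l) = 1 - ∫ ω, f l s ω ∂(μ l) := by
      rw [hg_def]
      simp only
      rw [integral_sub (integrable_const 1) (hfint s), integral_const]
      simp
    rw [this]
    have := hint l s
    linarith
  -- integral of exp(g)
  have hexpm : ∀ s, Measurable fun ω => Real.exp (g s ω) :=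
    fun s => Real.measurable_exp.comp (hgm s)
  have hexpint : ∀ s, Integrable (fun ω => Real.exp (g s ω)) (μ l) := by
    intro s
    refine Integrable.mono' (integrable_const (Real.exp 1)) (hexpm s).aestronglyMeasurable ?_
    exact Filter.Eventually.of_forall fun ω => by
      rw [Real.norm_eq_abs, abs_of_nonneg (Real.exp_pos _).le]
      exact Real.exp_le_exp.mpr (hg1 s ω)
  have hexpI : ∀ s, ∫ ω, Real.exp (g s ω) ∂(μ l) ≤ Real.exp (ε / 2) := by
    intro s
    have step1 : ∫ ω, Real.exp (g s ω) ∂(μ l)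
        ≤ ∫ ω, (1 + (Real.exp 1 - 1) * g s ω) ∂(μ l) := by
      refine integral_mono (hexpint s) ((integrable_const 1).add ((hgint s).const_mul _)) ?_
      intro ω
      exact exp_le_chord (hg0 s ω) (hg1 s ω)
    have step2 : ∫ ω, (1 + (Real.exp 1 - 1) * g s ω) ∂(μ l)
        = 1 + (Real.exp 1 - 1) * ∫ ω, g s ω ∂(μ l) := by
      rw [integral_add (integrable_const 1) ((hgint s).const_mul _), integral_const,
        integral_const_mul]
      simp
    have he1 : Real.exp 1 - 1 ≤ 2 := by
      have := Real.exp_one_lt_d9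
      norm_num at this ⊢
      linarith
    have he0 : 0 ≤ Real.exp 1 - 1 := by
      have := Real.one_le_exp (by norm_num : (0:ℝ) ≤ 1)
      linarith
    have hgi0 : 0 ≤ ∫ ω, g s ω ∂(μ l) := integral_nonneg fun ω => hg0 s ω
    have step3 : 1 + (Real.exp 1 - 1) * ∫ ω, g s ω ∂(μ l) ≤ 1 + 2 * δ := by
      have h2 : (Real.exp 1 - 1) * ∫ ω, g s ω ∂(μ l) ≤ 2 * δ :=
        mul_le_mul he1 (hgI s) hgi0 (by norm_num)
      linarith
    have step4 : (1 : ℝ) + 2 * δ ≤ Real.exp (2 * δ) := by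
      have := Real.add_one_le_exp (2 * δ)
      linarith
    have step5 : Real.exp (2 * δ) ≤ Real.exp (ε / 2) :=
      Real.exp_le_exp.mpr (by linarith)
    linarith
  -- the bad sets
  set A : (Fin l → S) → Set (Fin n → Ω l) :=
    fun s => {ω | ε * n ≤ ∑ i, g s (ω i)} with hA_def
  -- measure bound for each bad set
  have hAs : ∀ s, ((volume : Measure (Fin n → Ω l)) (A s)).toReal
      ≤ Real.exp (-(ε / 2) * n) := by
    intro s
    set h : (Fin n → Ω l) → ℝ := fun ω => ∏ i, Real.exp (g s (ω i)) with hh_def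
    have hhm : Measurable h := by
      apply Finset.measurable_prod
      intro i _
      exact (Real.measurable_exp.comp (hgm s)).comp (measurable_pi_apply i)
    have hh0 : ∀ ω, 0 ≤ h ω := fun ω => Finset.prod_nonneg fun i _ => (Real.exp_pos _).le
    have hhint : Integrable h (volume : Measure (Fin n → Ω l)) := by
      refine Integrable.mono' (integrable_const (Real.exp 1 ^ n)) hhm.aestronglyMeasurable ?_
      refine Filter.Eventually.of_forall fun ω => ?_
      rw [Real.norm_eq_abs, abs_of_nonneg (hh0 ω)]
      calc h ω ≤ ∏ _i : Fin n, Real.exp 1 :=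
            Finset.prod_le_prod (fun i _ => (Real.exp_pos _).le)
              (fun i _ => Real.exp_le_exp.mpr (hg1 s _))
        _ = Real.exp 1 ^ n := by simp
    have hhI : ∫ ω, h ω = (∫ ω, Real.exp (g s ω) ∂(μ l)) ^ n := by
      rw [hh_def]
      rw [volume_pi]; beta_reduce
      rw [integral_fintype_prod_eq_pow (ι := Fin n) (fun ω => Real.exp (g s ω))]
      simp [hvol]
    have hsubset : A s ⊆ {ω | Real.exp (ε * n) ≤ h ω} := by
      intro ω hω
      have : Real.exp (ε * n) ≤ Real.exp (∑ i, g s (ω i)) := Real.exp_le_exp.mpr hω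
      rwa [Real.exp_sum] at this
    have hmarkov := mul_meas_ge_le_integral_of_nonneg
      (μ := (volume : Measure (Fin n → Ω l))) (f := h)
      (Filter.Eventually.of_forall hh0) hhint (Real.exp (ε * n))
    have hIle : ∫ ω, h ω ≤ Real.exp (ε / 2 * n) := by
      rw [hhI]
      calc (∫ ω, Real.exp (g s ω) ∂(μ l)) ^ n ≤ Real.exp (ε / 2) ^ n :=
            pow_le_pow_left₀ (integral_nonneg fun ω => (Real.exp_pos _).le) (hexpI s) n
        _ = Real.exp (ε / 2 * n) := by rw [← Real.exp_nat_mul]; ring_nf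
    have hmono : ((volume : Measure (Fin n → Ω l)) (A s)).toReal
        ≤ ((volume : Measure (Fin n → Ω l)) {ω | Real.exp (ε * n) ≤ h ω}).toReal := by
      apply ENNReal.toReal_mono (measure_ne_top _ _)
      exact measure_mono hsubset
    have hpos : (0:ℝ) < Real.exp (ε * n) := Real.exp_pos _
    have : ((volume : Measure (Fin n → Ω l)) {ω | Real.exp (ε * n) ≤ h ω}).toReal
        ≤ Real.exp (ε / 2 * n) / Real.exp (ε * n) := by
      rw [le_div_iff₀ hpos, mul_comm]
      exact le_trans hmarkov hIle
    have hdiv : Real.exp (ε / 2 * n) / Real.exp (ε * n) = Real.exp (-(ε / 2) * n) := by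
      rw [← Real.exp_sub]; ring_nf
    linarith [hmono, this, hdiv ▸ this]
  -- union bound
  have hcard : (Fintype.card (Fin l → S) : ℝ) = (c : ℝ) ^ l := by
    simp [Fintype.card_fun, hc_def]
  have hunion : ((volume : Measure (Fin n → Ω l)) (⋃ s, A s)).toReal
      ≤ (c : ℝ) ^ l * Real.exp (-(ε / 2) * n) := by
    have h1 : (volume : Measure (Fin n → Ω l)) (⋃ s, A s)
        ≤ ∑ s : Fin l → S, (volume : Measure (Fin n → Ω l)) (A s) :=
      measure_iUnion_fintype_le _ _
    have h2 : ((volume : Measure (Fin n → Ω l)) (⋃ s, A s)).toReal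
        ≤ (∑ s : Fin l → S, (volume : Measure (Fin n → Ω l)) (A s)).toReal := by
      apply ENNReal.toReal_mono
      · exact (ENNReal.sum_lt_top.2 fun s _ => measure_lt_top _ _).ne
      · exact h1
    have h3 : (∑ s : Fin l → S, (volume : Measure (Fin n → Ω l)) (A s)).toReal
        = ∑ s : Fin l → S, ((volume : Measure (Fin n → Ω l)) (A s)).toReal :=
      ENNReal.toReal_sum fun s _ => measure_ne_top _ _
    have h4 : ∑ s : Fin l → S, ((volume : Measure (Fin n → Ω l)) (A s)).toReal
        ≤ ∑ _s : Fin l → S, Real.exp (-(ε / 2) * n) :=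
      Finset.sum_le_sum fun s _ => hAs s
    have h5 : ∑ _s : Fin l → S, Real.exp (-(ε / 2) * n)
        = (c : ℝ) ^ l * Real.exp (-(ε / 2) * n) := by
      rw [Finset.sum_const, nsmul_eq_mul]
      rw [show ((Finset.univ : Finset (Fin l → S)).card : ℝ) = (c:ℝ)^l by
        rw [Finset.card_univ]; exact hcard]
    linarith [h2, h3 ▸ h2, h4, h5 ▸ h4]
  -- numeric bound
  have hnum : (c : ℝ) ^ l * Real.exp (-(ε / 2) * n) < 1 := by
    have hcpos : (0:ℝ) < (c : ℝ) := by exact_mod_cast hc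
    have hcl : Real.exp ((l:ℝ) * Real.log c) = (c : ℝ) ^ l := by
      rw [Real.exp_nat_mul, Real.exp_log hcpos]
    rw [← hcl, ← Real.exp_add]
    rw [show (1:ℝ) = Real.exp 0 by rw [Real.exp_zero]]
    apply Real.exp_lt_exp.mpr
    · have hlog : Real.log c < ε / 2 * l := by
        rw [div_lt_iff₀ hε0] at hNl
        linarith
      have hl0 : (0:ℝ) < l := by exact_mod_cast hl1
      have hn2 : (n:ℝ) = (l:ℝ) ^ 2 := by
        rw [hn_def]; push_cast; ring
      have : (l:ℝ) * Real.log c < (l:ℝ) * (ε / 2 * l) :=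
        (mul_lt_mul_iff_right₀ hl0).mpr hlog
      rw [hn2]
      nlinarith
  -- extract a good point
  have hlt : ((volume : Measure (Fin n → Ω l)) (⋃ s, A s)).toReal < 1 :=
    lt_of_le_of_lt hunion hnum
  have hne : (⋃ s, A s) ≠ Set.univ := by
    intro heq
    rw [heq, measure_univ] at hlt
    norm_num at hlt
  obtain ⟨ω, hω⟩ : ∃ ω : Fin n → Ω l, ω ∉ ⋃ s, A s := by
    by_contra hcon
    push_neg at hcon
    exact hne (Set.eq_univ_of_forall hcon)
  refine ⟨ω, fun s => ?_⟩
  have hωs : ¬ (ε * n ≤ ∑ i, g s (ω i)) := by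
    intro hcon
    exact hω (Set.mem_iUnion.mpr ⟨s, hcon⟩)
  push_neg at hωs
  have hsum : ∑ i, g s (ω i) = (n : ℝ) - ∑ i, f l s (ω i) := by
    rw [hg_def]
    simp [Finset.sum_sub_distrib]
  rw [hsum] at hωs
  have hn2 : (n:ℝ) = (l:ℝ) ^ 2 := by rw [hn_def]; push_cast; ring
  have hl0 : (0:ℝ) < (l:ℝ) ^ 2 := by
    have : (0:ℝ) < l := by exact_mod_cast hl1
    positivity
  rw [hn2] at hωs
  rw [one_div, inv_mul_eq_div, lt_div_iff₀ hl0]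
  nlinarith
end

section
/- Outer polytope approximation: Let V be a finite-dimensional real normed vector space, A ⊆ V a nonempty compact convex set, and ε > 0. Then there exists a finite set F ⊆ V such that A ⊆ conv(F) and the Hausdorff distance between A and conv(F) (with respect to the norm of V) is at most ε. -/
open Set Metric Pointwise

/-- In a finite-dimensional real normed space there is a finite set inside the
closed `ε`-ball around the origin whose convex hull contains a small ball. -/
lemma exists_finset_ball_subset_convexHull
    {V : Type*} [NormedAddCommGroup V] [NormedSpace ℝ V] [FiniteDimensional ℝ V]
    (ε : ℝ) (hε : 0 < ε) :
    ∃ (B : Finset V) (δ : ℝ), 0 < δ ∧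
      Metric.ball (0 : V) δ ⊆ convexHull ℝ (B : Set V) ∧
      (B : Set V) ⊆ Metric.closedBall 0 ε := by
  classical
  obtain ⟨b⟩ := AffineBasis.exists_affineBasis_of_finiteDimensional
    (ι := Fin (Module.finrank ℝ V + 1)) (k := ℝ) (V := V) (P := V) (by simp)
  set S : Set V := Set.range b with hS
  have hSfin : S.Finite := Set.finite_range b
  -- interior of the convex hull of `S` is nonempty
  have hint : (interior (convexHull ℝ S)).Nonempty := by
    rw [interior_convexHull_nonempty_iff_affineSpan_eq_top]
    exact b.tot
  obtain ⟨x0, hx0⟩ := hint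
  obtain ⟨r, hr, hball⟩ := Metric.isOpen_iff.1 isOpen_interior x0 hx0
  have hball' : Metric.ball x0 r ⊆ convexHull ℝ S := hball.trans interior_subset
  obtain ⟨C, hC⟩ := (hSfin.isBounded).subset_closedBall x0
  set C' : ℝ := max C 1 with hC'
  have hC'pos : (0 : ℝ) < C' := lt_of_lt_of_le one_pos (le_max_right _ _)
  set t : ℝ := ε / C' with ht
  have htpos : 0 < t := div_pos hε hC'pos
  set B : Finset V := hSfin.toFinset.image (fun v => t • (v - x0)) with hB
  refine ⟨B, t * r, mul_pos htpos hr, ?_, ?_⟩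
  · -- ball 0 (t*r) ⊆ convexHull B
    have hBcoe : (B : Set V) = (fun v => t • (v - x0)) '' S := by
      simp [hB, Set.Finite.coe_toFinset]
    have haff : ∃ f : V →ᵃ[ℝ] V, ∀ v, f v = t • (v - x0) := by
      refine ⟨(LinearMap.lsmul ℝ V t).toAffineMap.comp
        (AffineMap.id ℝ V - AffineMap.const ℝ V x0), fun v => ?_⟩
      simp [AffineMap.comp_apply, LinearMap.toAffineMap]
    obtain ⟨f, hf⟩ := haff
    have key : convexHull ℝ (B : Set V) = f '' convexHull ℝ S := by
      rw [hBcoe, ← funext hf, f.image_convexHull]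
    rw [key]
    intro y hy
    have hyn : ‖y‖ < t * r := by simpa using hy
    refine ⟨x0 + t⁻¹ • y, hball' ?_, ?_⟩
    · have : dist (x0 + t⁻¹ • y) x0 = t⁻¹ * ‖y‖ := by
        rw [dist_eq_norm, add_sub_cancel_left, norm_smul, Real.norm_eq_abs,
          abs_of_pos (inv_pos.2 htpos)]
      rw [Metric.mem_ball, this]
      calc t⁻¹ * ‖y‖ < t⁻¹ * (t * r) := by
            exact mul_lt_mul_of_pos_left hyn (inv_pos.2 htpos)
        _ = r := by field_simp
    · rw [hf, add_sub_cancel_left, smul_smul, mul_inv_cancel₀ htpos.ne', one_smul]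
  · -- B ⊆ closedBall 0 ε
    intro y hy
    simp only [hB, Finset.coe_image, Set.Finite.coe_toFinset, Set.mem_image] at hy
    obtain ⟨v, hv, rfl⟩ := hy
    have hvd : dist v x0 ≤ C' := le_trans (hC hv) (le_max_left _ _)
    have : ‖t • (v - x0)‖ = t * ‖v - x0‖ := by
      rw [norm_smul, Real.norm_eq_abs, abs_of_pos htpos]
    rw [Metric.mem_closedBall, dist_zero_right, this]
    calc t * ‖v - x0‖ ≤ t * C' := by
          exact mul_le_mul_of_nonneg_left (by rwa [← dist_eq_norm]) htpos.le
      _ = ε := by rw [ht]; field_simp [hC'pos.ne']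

/-- Outer polytope approximation: every nonempty compact convex set `A` in a
finite-dimensional real normed space can be enclosed in a convex polytope `conv F`
(`F` finite) whose Hausdorff distance to `A` is at most `ε`. -/
theorem outer_polytope_approximation
    {V : Type*} [NormedAddCommGroup V] [NormedSpace ℝ V] [FiniteDimensional ℝ V]
    (A : Set V) (hA : A.Nonempty) (hAcomp : IsCompact A) (hAconv : Convex ℝ A)
    (ε : ℝ) (hε : 0 < ε) :
    ∃ F : Finset V, A ⊆ convexHull ℝ (F : Set V) ∧
      Metric.hausdorffDist A (convexHull ℝ (F : Set V)) ≤ ε := by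
  classical
  obtain ⟨B, δ, hδ, hballB, hBball⟩ := exists_finset_ball_subset_convexHull (V := V) ε hε
  obtain ⟨s, hsA, hsfin, hcov⟩ :=
    finite_approx_of_totallyBounded hAcomp.totallyBounded δ hδ
  set F : Finset V := hsfin.toFinset + B with hF
  have hFcoe : (F : Set V) = s + (B : Set V) := by
    simp [hF, Finset.coe_add, Set.Finite.coe_toFinset]
  have hhull : convexHull ℝ (F : Set V) = convexHull ℝ s + convexHull ℝ (B : Set V) := by
    rw [hFcoe, convexHull_add]
  have hsub : A ⊆ convexHull ℝ (F : Set V) := by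
    intro a ha
    obtain ⟨x, hx, hax⟩ := by simpa using hcov ha
    rw [hhull]
    refine ⟨x, subset_convexHull ℝ s hx, a - x, hballB ?_, by simp⟩
    simpa [dist_eq_norm] using hax
  refine ⟨F, hsub, ?_⟩
  have hconvA : convexHull ℝ s ⊆ A := convexHull_min hsA hAconv
  have hconvB : convexHull ℝ (B : Set V) ⊆ Metric.closedBall 0 ε :=
    convexHull_min hBball (convex_closedBall _ _)
  refine Metric.hausdorffDist_le_of_mem_dist hε.le (fun x hx => ⟨x, hsub hx, by simp [hε.le]⟩) ?_
  intro y hy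
  rw [hhull] at hy
  obtain ⟨u, hu, v, hv, rfl⟩ := hy
  refine ⟨u, hconvA hu, ?_⟩
  have := hconvB hv
  rw [Metric.mem_closedBall, dist_zero_right] at this
  simpa [dist_eq_norm] using this
end
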